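/- Let p be prime, F a field, K a division subring of M_p(F) properly containing the scalar matrices, and A ∈ K not scalar. Then for each i = 1,…,p, the i-th rows of the matrices I, A, A², …, A^{p-1} form a basis of F^p (equivalently, they are linearly independent over F). -/

import Mathlib

set_option maxHeartbeats 1000000

open Polynomial

section Aux

variable {p : ℕ} {F : Type*} [Field F]

/-- Polynomials in `A` lie in any subring containing the scalars and `A`. -/
lemma aux_aeval_mem (K : Subring (Matrix (Fin p) (Fin p) F))
    (hscalar : ∀ c : F, algebraMap F (Matrix (Fin p) (Fin p) F) c ∈ K)
    {A : Matrix (Fin p) (Fin p) F} (hA : A ∈ K) (q : F[X]) :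
    Polynomial.aeval A q ∈ K := by
  induction q using Polynomial.induction_on with
  | C a => simpa using hscalar a
  | add q r hq hr => simpa using K.add_mem hq hr
  | monomial n a h =>
      have : (Polynomial.aeval A) (Polynomial.C a * Polynomial.X ^ (n + 1))
          = (Polynomial.aeval A) (Polynomial.C a * Polynomial.X ^ n) * A := by
        simp [pow_succ, mul_assoc]
      rw [this]
      exact K.mul_mem h hA

/-- If the minimal polynomial of a `p × p` matrix is irreducible, its degree divides `p`. -/
lemma aux_natDegree_dvd (A : Matrix (Fin p) (Fin p) F)
    (hirr : Irreducible (minpoly F A)) : (minpoly F A).natDegree ∣ p := by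
  have hf0 : minpoly F A ≠ 0 := hirr.ne_zero
  haveI : Fact (Irreducible (minpoly F A)) := ⟨hirr⟩
  set L := AdjoinRoot (minpoly F A) with hL
  let α : F[X] →ₐ[F] Module.End F (Fin p → F) :=
    (Matrix.toLinAlgEquiv' : Matrix (Fin p) (Fin p) F ≃ₐ[F] _).toAlgHom.comp
      (Polynomial.aeval A)
  have hker : ∀ a : F[X], a ∈ Ideal.span {minpoly F A} → α a = 0 := by
    intro a ha
    obtain ⟨c, rfl⟩ := Ideal.mem_span_singleton.mp ha
    have : Polynomial.aeval A (minpoly F A * c) = 0 := by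
      rw [map_mul, minpoly.aeval, zero_mul]
    show (Matrix.toLinAlgEquiv' : Matrix (Fin p) (Fin p) F ≃ₐ[F] _)
        (Polynomial.aeval A (minpoly F A * c)) = 0
    rw [this, map_zero]
  let Ψ : L →ₐ[F] Module.End F (Fin p → F) :=
    Ideal.Quotient.liftₐ (Ideal.span {minpoly F A}) α hker
  letI : Module L (Fin p → F) := Module.compHom _ (Ψ : L →+* Module.End F (Fin p → F))
  haveI : IsScalarTower F L (Fin p → F) := by
    constructor
    intro c l v
    show Ψ (c • l) v = c • (Ψ l v)
    rw [map_smul]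
    rfl
  haveI : FiniteDimensional F L :=
    Module.Finite.of_basis (AdjoinRoot.powerBasis hf0).basis
  have hrk : Module.finrank F L = (minpoly F A).natDegree := by
    rw [(AdjoinRoot.powerBasis hf0).finrank]
    rfl
  have htower := Module.finrank_mul_finrank F L (Fin p → F)
  rw [hrk, Module.finrank_fin_fun] at htower
  exact ⟨_, htower.symm⟩

end Aux

theorem stmt_7 (p : ℕ) (hp : p.Prime) (F : Type*) [Field F]
    (K : Subring (Matrix (Fin p) (Fin p) F))
    (hscalar : ∀ c : F, algebraMap F (Matrix (Fin p) (Fin p) F) c ∈ K)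
    (hproper : ∃ B ∈ K, B ∉ Set.range (algebraMap F (Matrix (Fin p) (Fin p) F)))
    (hdiv : ∀ x ∈ K, x ≠ 0 → ∃ y ∈ K, x * y = 1 ∧ y * x = 1)
    (A : Matrix (Fin p) (Fin p) F) (hA : A ∈ K)
    (hAs : A ∉ Set.range (algebraMap F (Matrix (Fin p) (Fin p) F))) :
    ∀ i : Fin p,
      LinearIndependent F (fun k : Fin p => (A ^ (k : ℕ)) i) ∧
      Submodule.span F (Set.range fun k : Fin p => (A ^ (k : ℕ)) i) = ⊤ := by
  have hp0 : 0 < p := hp.pos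
  haveI : NeZero p := ⟨hp.ne_zero⟩
  have hAint : IsIntegral F A := IsIntegral.of_finite F A
  have hmon : (minpoly F A).Monic := minpoly.monic hAint
  have hf0 : minpoly F A ≠ 0 := hmon.ne_zero
  have hdpos : 0 < (minpoly F A).natDegree := minpoly.natDegree_pos hAint
  -- any nonzero polynomial of degree < deg f evaluates to an invertible element
  have hinv : ∀ q : F[X], q ≠ 0 → q.natDegree < (minpoly F A).natDegree →
      ∃ y ∈ K, Polynomial.aeval A q * y = 1 ∧ y * Polynomial.aeval A q = 1 := by
    intro q hq hdeg
    have hne : Polynomial.aeval A q ≠ 0 := by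
      intro h0
      have hdvd : minpoly F A ∣ q := minpoly.dvd F A h0
      have := Polynomial.natDegree_le_of_dvd hdvd hq
      omega
    exact hdiv _ (aux_aeval_mem K hscalar hA q) hne
  -- the minimal polynomial is irreducible
  have hirr : Irreducible (minpoly F A) := by
    constructor
    · intro hu
      have h0 : (minpoly F A).natDegree = 0 := Polynomial.natDegree_eq_zero_of_isUnit hu
      omega
    · rintro g h hgh
      by_contra hng
      push_neg at hng
      obtain ⟨hgu, hhu⟩ := hng
      have hg0 : g ≠ 0 := by rintro rfl; rw [zero_mul] at hgh; exact hf0 hgh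
      have hh0 : h ≠ 0 := by rintro rfl; rw [mul_zero] at hgh; exact hf0 hgh
      have hdg : 0 < g.natDegree := by
        by_contra h1
        push_neg at h1
        exact hgu (Polynomial.isUnit_iff_degree_eq_zero.mpr
          (by rw [Polynomial.degree_eq_natDegree hg0, Nat.le_zero.mp h1]; rfl))
      have hdh : 0 < h.natDegree := by
        by_contra h1
        push_neg at h1
        exact hhu (Polynomial.isUnit_iff_degree_eq_zero.mpr
          (by rw [Polynomial.degree_eq_natDegree hh0, Nat.le_zero.mp h1]; rfl))
      have hdeq : g.natDegree + h.natDegree = (minpoly F A).natDegree := by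
        rw [hgh, Polynomial.natDegree_mul hg0 hh0]
      have hzero : Polynomial.aeval A g * Polynomial.aeval A h = 0 := by
        rw [← map_mul, ← hgh]; exact minpoly.aeval F A
      obtain ⟨y, _, _, hy2⟩ := hinv g hg0 (by omega)
      obtain ⟨z, _, hz1, _⟩ := hinv h hh0 (by omega)
      have hhz : Polynomial.aeval A h = 0 := by
        calc Polynomial.aeval A h = y * (Polynomial.aeval A g * Polynomial.aeval A h) := by
              rw [← mul_assoc, hy2, one_mul]
          _ = 0 := by rw [hzero, mul_zero]
      rw [hhz, zero_mul] at hz1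
      exact one_ne_zero hz1.symm
  -- degree of the minimal polynomial equals p
  have hd1 : (minpoly F A).natDegree ≠ 1 := fun h1 =>
    hAs (minpoly.natDegree_eq_one_iff.mp h1)
  have hdeg : (minpoly F A).natDegree = p := by
    rcases hp.eq_one_or_self_of_dvd _ (aux_natDegree_dvd A hirr) with h | h
    · exact absurd h hd1
    · exact h
  -- main argument
  intro i
  have hind : LinearIndependent F (fun k : Fin p => (A ^ (k : ℕ)) i) := by
    rw [Fintype.linearIndependent_iff]
    intro c hc
    by_contra hcn
    push_neg at hcn
    obtain ⟨k₀, hk₀⟩ := hcn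
    set q : F[X] := ∑ k : Fin p, Polynomial.monomial (k : ℕ) (c k) with hq
    have hcoeff : ∀ k : Fin p, q.coeff (k : ℕ) = c k := by
      intro k
      rw [hq, Polynomial.finset_sum_coeff]
      rw [Finset.sum_eq_single k]
      · simp
      · intro b _ hb
        rw [Polynomial.coeff_monomial]
        exact if_neg (fun h => hb (Fin.ext h))
      · simp
    have hq0 : q ≠ 0 := by
      intro h0
      apply hk₀
      rw [← hcoeff k₀, h0, Polynomial.coeff_zero]
    have hqdeg : q.natDegree < p := by
      have hdq : q.degree < (p : ℕ) := by
        apply lt_of_le_of_lt (Polynomial.degree_sum_le _ _)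
        refine (Finset.sup_lt_iff (by exact_mod_cast WithBot.bot_lt_coe p)).mpr ?_
        intro k _
        exact lt_of_le_of_lt (Polynomial.degree_monomial_le _ _) (by exact_mod_cast k.2)
      exact (Polynomial.natDegree_lt_iff_degree_lt hq0).mpr hdq
    obtain ⟨y, _, hy1, _⟩ := hinv q hq0 (by omega)
    have hrow : (Polynomial.aeval A q) i = 0 := by
      have haq : Polynomial.aeval A q = ∑ k : Fin p, c k • A ^ (k : ℕ) := by
        rw [hq, map_sum]
        congr 1
        funext k
        rw [Polynomial.aeval_monomial, Algebra.smul_def]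
      rw [haq]
      calc (∑ k : Fin p, c k • A ^ (k : ℕ)) i = ∑ k : Fin p, c k • (A ^ (k : ℕ)) i := by
            funext j
            simp [Matrix.sum_apply, Matrix.smul_apply, smul_eq_mul]
        _ = 0 := hc
    have h1row : ((1 : Matrix (Fin p) (Fin p) F)) i i = 0 := by
      rw [← hy1, Matrix.mul_apply]
      apply Finset.sum_eq_zero
      intro k _
      have hz : (Polynomial.aeval A q) i k = 0 := by rw [hrow]; rfl
      rw [hz, zero_mul]
    rw [Matrix.one_apply_eq] at h1row
    exact one_ne_zero h1row
  refine ⟨hind, ?_⟩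
  apply hind.span_eq_top_of_card_eq_finrank
  simp [Module.finrank_fin_fun]
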